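/- Let n ≥ 4 be an even integer, let t₀ = nπ/(n+1), and let α₀ = (1 + n + n·cos(t₀) + cos(n t₀))/(n+1). Then for every z ∈ 𝔻, Re φ_{nL}(z) > α₀. (Consequently S*_{nL} ⊂ S*(α), the class of starlike functions of order α, for every 0 ≤ α ≤ α₀.) -/

import Mathlib

open Complex Metric Set

/-- The function φ_{nL}(z) = 1 + n z/(n+1) + z^n/(n+1). -/
noncomputable def phinL (n : ℕ) (z : ℂ) : ℂ :=
  1 + (n : ℂ) * z / ((n : ℂ) + 1) + z ^ n / ((n : ℂ) + 1)

/-- Ω_{nL} = φ_{nL}(𝔻), the image of the open unit disk. -/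
def OmeganL (n : ℕ) : Set ℂ := phinL n '' ball (0 : ℂ) 1

/-- f is analytic on the unit disk with f(0) = 0 and f'(0) = 1. -/
def IsNormalizedAnalytic (f : ℂ → ℂ) : Prop :=
  AnalyticOnNhd ℂ f (ball (0 : ℂ) 1) ∧ f 0 = 0 ∧ deriv f 0 = 1

/-- p is subordinate to ψ on the unit disk. -/
def Subord (p ψ : ℂ → ℂ) : Prop :=
  ∃ ω : ℂ → ℂ, AnalyticOnNhd ℂ ω (ball (0 : ℂ) 1) ∧ ω 0 = 0 ∧
    (∀ z ∈ ball (0 : ℂ) 1, ω z ∈ ball (0 : ℂ) 1) ∧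
    (∀ z ∈ ball (0 : ℂ) 1, p z = ψ (ω z))

/-- Membership in the class S*_{nL}. -/
def MemSnL (n : ℕ) (f : ℂ → ℂ) : Prop :=
  IsNormalizedAnalytic f ∧ (∀ z ∈ ball (0 : ℂ) 1, z ≠ 0 → f z ≠ 0) ∧
  Subord (fun z => if z = 0 then 1 else z * deriv f z / f z) (phinL n)

open Real

lemma aux_c_gt (n : ℕ) (hn : 4 ≤ n) :
    (n : ℝ) - 1 < ((n:ℝ) + 1) * Real.cos (π / ((n:ℝ) + 1)) := by
  have hn1 : (5:ℝ) ≤ (n:ℝ) + 1 := by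
    have : (4:ℝ) ≤ (n:ℝ) := by exact_mod_cast hn
    linarith
  have hpos : (0:ℝ) < (n:ℝ) + 1 := by linarith
  have hcos := Real.one_sub_sq_div_two_le_cos (x := π / ((n:ℝ) + 1))
  have hpi : Real.pi < 3.15 := by
    have := Real.pi_lt_d2
    linarith
  have hpi0 : 0 < Real.pi := Real.pi_pos
  have hpi2 : π ^ 2 < 10 := by nlinarith
  have key : ((n:ℝ)+1) * (π / ((n:ℝ)+1))^2 < 4 := by
    have h2 : (π/((n:ℝ)+1))^2 = π^2/((n:ℝ)+1)^2 := by rw [div_pow]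
    have h3 : ((n:ℝ)+1) * (π^2/((n:ℝ)+1)^2) = π^2/((n:ℝ)+1) := by
      field_simp
    rw [h2, h3, div_lt_iff₀ hpos]
    nlinarith
  nlinarith [mul_le_mul_of_nonneg_left hcos hpos.le]

lemma rsin_add_sin (x y : ℝ) :
    Real.sin x + Real.sin y = 2 * Real.sin ((x+y)/2) * Real.cos ((x-y)/2) := by
  have h1 := Real.sin_add ((x+y)/2) ((x-y)/2)
  have h2 := Real.sin_sub ((x+y)/2) ((x-y)/2)
  have hx : (x+y)/2 + (x-y)/2 = x := by ring
  have hy : (x+y)/2 - (x-y)/2 = y := by ring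
  rw [hx] at h1
  rw [hy] at h2
  rw [h1, h2]
  ring

lemma aux_cos_t0 (n : ℕ) (hn : 4 ≤ n) :
    Real.cos ((n:ℝ) * π / ((n:ℝ) + 1)) = - Real.cos (π / ((n:ℝ) + 1)) := by
  have hpos : (0:ℝ) < (n:ℝ) + 1 := by positivity
  have h : (n:ℝ) * π / ((n:ℝ) + 1) = π - π / ((n:ℝ) + 1) := by
    field_simp
    ring
  rw [h, Real.cos_pi_sub]

lemma aux_boundary (n : ℕ) (hn : 4 ≤ n) (hne : Even n) :
    ∀ t ∈ Set.Icc (0:ℝ) π,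
      0 ≤ (n:ℝ) * Real.cos t + Real.cos ((n:ℝ) * t)
          + ((n:ℝ)+1) * Real.cos (π/((n:ℝ)+1)) := by
  set c : ℝ := Real.cos (π/((n:ℝ)+1)) with hc
  set h : ℝ → ℝ := fun t => (n:ℝ) * Real.cos t + Real.cos ((n:ℝ) * t) + ((n:ℝ)+1) * c with hh
  have hpos : (0:ℝ) < (n:ℝ) + 1 := by positivity
  have hn4 : (4:ℝ) ≤ (n:ℝ) := by exact_mod_cast hn
  have hcgt := aux_c_gt n hn
  have hcont : ContinuousOn h (Set.Icc 0 π) := by fun_prop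
  have hderiv : ∀ x : ℝ, HasDerivAt h ((n:ℝ) * (-Real.sin x) + (-Real.sin ((n:ℝ)*x)) * (n:ℝ)) x := by
    intro x
    have h1 : HasDerivAt (fun x : ℝ => (n:ℝ) * Real.cos x) ((n:ℝ) * (-Real.sin x)) x :=
      (Real.hasDerivAt_cos x).const_mul _
    have h2 : HasDerivAt (fun x : ℝ => Real.cos ((n:ℝ) * x)) ((-Real.sin ((n:ℝ)*x)) * (n:ℝ)) x := by
      have := (Real.hasDerivAt_cos ((n:ℝ)*x)).comp x ((hasDerivAt_id x).const_mul (n:ℝ))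
      exact this.congr_deriv (by ring)
    exact (h1.add h2).add_const (((n:ℝ)+1) * c)
  obtain ⟨t0, ht0, hmin⟩ := isCompact_Icc.exists_isMinOn (Set.nonempty_Icc.2 Real.pi_pos.le) hcont
  suffices hs : 0 ≤ h t0 by
    intro t ht
    exact hs.trans (hmin ht)
  rcases eq_or_lt_of_le ht0.1 with h0 | hlt0
  · -- t0 = 0
    simp only [hh, ← h0, Real.cos_zero, mul_zero, mul_one]
    nlinarith
  rcases eq_or_lt_of_le ht0.2 with hpi' | hltpi
  · -- t0 = π
    obtain ⟨m, hm⟩ := hne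
    have hcn : Real.cos ((n:ℝ) * π) = 1 := by
      have he : (n:ℝ) * π = (m:ℝ) * (2 * π) := by
        have : (n:ℝ) = 2 * (m:ℝ) := by exact_mod_cast by omega
        rw [this]; ring
      rw [he, Real.cos_nat_mul_two_pi]
    simp only [hh, hpi', Real.cos_pi, hcn]
    nlinarith
  -- interior critical point
  have hloc : IsLocalMin h t0 := hmin.isLocalMin (Icc_mem_nhds hlt0 hltpi)
  have hd0 := hloc.hasDerivAt_eq_zero (hderiv t0)
  have hn0 : (0:ℝ) < (n:ℝ) := by linarith
  have hsin : Real.sin t0 + Real.sin ((n:ℝ) * t0) = 0 := by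
    have hmul : (n:ℝ) * (Real.sin t0 + Real.sin ((n:ℝ)*t0)) = 0 := by linear_combination -hd0
    rcases mul_eq_zero.mp hmul with h' | h'
    · exact absurd h' hn0.ne'
    · exact h'
  rw [rsin_add_sin] at hsin
  have H2 : Real.sin ((t0 + (n:ℝ)*t0)/2) = 0 ∨ Real.cos ((t0 - (n:ℝ)*t0)/2) = 0 := by
    rcases mul_eq_zero.mp hsin with h' | h'
    · rcases mul_eq_zero.mp h' with h'' | h''
      · norm_num at h''
      · exact Or.inl h''
    · exact Or.inr h'
  rcases H2 with hA | hB
  · -- case A : (n+1) t0 = 2kπ, cos(n t0) = cos t0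
    obtain ⟨k, hk⟩ := Real.sin_eq_zero_iff.mp hA
    have hkey : ((n:ℝ)+1) * t0 = (k:ℝ) * (2 * π) := by linarith
    have hcosn : Real.cos ((n:ℝ) * t0) = Real.cos t0 := by
      have : (n:ℝ) * t0 = (k:ℝ) * (2*π) - t0 := by linarith [hkey]
      rw [this, Real.cos_int_mul_two_pi_sub]
    -- bound t0 ≤ nπ/(n+1)
    have hk2n : 2 * (k:ℝ) ≤ (n:ℝ) := by
      have hklt : (k:ℝ) * (2*π) < ((n:ℝ)+1) * π := by
        rw [← hkey]
        have := mul_lt_mul_of_pos_left hltpi hpos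
        linarith
      have h2k : (2*(k:ℤ) : ℝ) < (n:ℝ)+1 := by
        push_cast
        nlinarith [Real.pi_pos]
      have : 2*(k:ℤ) < (n:ℤ)+1 := by exact_mod_cast h2k
      have : 2*(k:ℤ) ≤ (n:ℤ) := by omega
      exact_mod_cast this
    have ht0le : t0 ≤ (n:ℝ) * π / ((n:ℝ)+1) := by
      rw [le_div_iff₀ hpos]
      have : ((n:ℝ)+1) * t0 = 2*(k:ℝ)*π := by linarith [hkey]
      nlinarith [Real.pi_pos]
    have hcos_ge : Real.cos ((n:ℝ) * π / ((n:ℝ)+1)) ≤ Real.cos t0 := by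
      apply Real.cos_le_cos_of_nonneg_of_le_pi ht0.1 _ ht0le
      rw [div_le_iff₀ hpos]
      nlinarith [Real.pi_pos]
    have hct0 : Real.cos ((n:ℝ)*π/((n:ℝ)+1)) = -c := by
      rw [hc]
      exact aux_cos_t0 n hn
    simp only [hh, hcosn]
    rw [hct0] at hcos_ge
    nlinarith
  · -- case B : (n-1) t0 = (2k+1)π (up to sign), cos(n t0) = -cos t0
    obtain ⟨k, hk⟩ := Real.cos_eq_zero_iff.mp hB
    -- (t0 - n t0)/2 = (2k+1)π/2  ⇒ n t0 = t0 - (2k+1) π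
    have hnt0 : (n:ℝ) * t0 = t0 - ((2*(k:ℝ)+1) * π) := by
      have : (t0 - (n:ℝ)*t0) = (2*(k:ℝ)+1) * π := by
        field_simp at hk
        linarith
      linarith
    have hcosn : Real.cos ((n:ℝ) * t0) = - Real.cos t0 := by
      have he : (n:ℝ) * t0 = (t0 - π) - (k:ℝ) * (2*π) := by rw [hnt0]; ring
      rw [he, Real.cos_sub_int_mul_two_pi, ← Real.cos_neg, neg_sub, Real.cos_pi_sub]
    simp only [hh, hcosn]
    have := Real.neg_one_le_cos t0
    nlinarith

lemma aux_interior (n : ℕ) (hn : 4 ≤ n) (hne : Even n) {z : ℂ} (hz : z ∈ ball (0:ℂ) 1) :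
    0 < (z ^ n + (n:ℂ) * z + ((((n:ℝ)+1) * Real.cos (π/((n:ℝ)+1)) : ℝ) : ℂ)).re := by
  set C : ℝ := ((n:ℝ)+1) * Real.cos (π/((n:ℝ)+1)) with hC
  set g : ℂ → ℂ := fun w => w ^ n + (n:ℂ) * w + (C : ℂ) with hg
  set f : ℂ → ℂ := fun w => Complex.exp (-(g w)) with hf
  have hgdiff : Differentiable ℂ g := by fun_prop
  have hfdiff : Differentiable ℂ f := by fun_prop
  -- boundary bound
  have hbdry : ∀ w ∈ frontier (ball (0:ℂ) 1), ‖f w‖ ≤ 1 := by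
    intro w hw
    rw [frontier_ball (0:ℂ) one_ne_zero] at hw
    have hwn : ‖w‖ = 1 := by
      simpa [Complex.dist_eq] using (mem_sphere.mp hw)
    have harg : w = Complex.exp ((w.arg : ℂ) * Complex.I) := by
      conv_lhs => rw [← Complex.norm_mul_exp_arg_mul_I w]
      rw [hwn]
      simp
    have h1 : w.re = Real.cos w.arg := by
      conv_lhs => rw [harg]
      exact Complex.exp_ofReal_mul_I_re _
    have h2 : (w ^ n).re = Real.cos ((n:ℝ) * w.arg) := by
      conv_lhs => rw [harg]
      rw [← Complex.exp_nat_mul]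
      have he : (n:ℂ) * ((w.arg : ℂ) * Complex.I) = ((((n:ℝ) * w.arg : ℝ)) : ℂ) * Complex.I := by
        push_cast; ring
      rw [he]
      exact Complex.exp_ofReal_mul_I_re _
    have hre : (g w).re = (n:ℝ) * Real.cos w.arg + Real.cos ((n:ℝ) * w.arg) + C := by
      simp only [hg, Complex.add_re, Complex.ofReal_re, h2]
      have : ((n:ℂ) * w).re = (n:ℝ) * w.re := by
        simp [Complex.mul_re]
      rw [this, h1]
      ring
    -- apply boundary lemma with t = |arg w|
    have harg_mem : |w.arg| ∈ Set.Icc (0:ℝ) π := by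
      constructor
      · exact abs_nonneg _
      · rw [abs_le]
        have := Complex.arg_mem_Ioc w
        constructor <;> [linarith [this.1]; exact this.2]
    have hb := aux_boundary n hn hne |w.arg| harg_mem
    have hcos1 : Real.cos |w.arg| = Real.cos w.arg := Real.cos_abs _
    have hcos2 : Real.cos ((n:ℝ) * |w.arg|) = Real.cos ((n:ℝ) * w.arg) := by
      rcases abs_choice w.arg with h | h
      · rw [h]
      · rw [h, mul_neg, Real.cos_neg]
    rw [hcos1, hcos2] at hb
    have hge : 0 ≤ (g w).re := by rw [hre]; linarith
    have : ‖f w‖ = Real.exp (-(g w).re) := by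
      rw [hf]
      simp [Complex.norm_exp]
    rw [this]
    exact Real.exp_le_one_iff.mpr (by linarith)
  -- max modulus on closure
  have hmax : ∀ w ∈ closure (ball (0:ℂ) 1), ‖f w‖ ≤ 1 := fun w hw =>
    Complex.norm_le_of_forall_mem_frontier_norm_le isBounded_ball
      hfdiff.diffContOnCl hbdry hw
  by_contra hcon
  push_neg at hcon
  have hfz : 1 ≤ ‖f z‖ := by
    have : ‖f z‖ = Real.exp (-(g z).re) := by rw [hf]; simp [Complex.norm_exp]
    rw [this]
    rw [Real.one_le_exp_iff]
    linarith
  have hmaxon : IsMaxOn (norm ∘ f) (ball (0:ℂ) 1) z := by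
    intro w hw
    have := hmax w (subset_closure hw)
    simp only [Function.comp_apply]
    calc ‖f w‖ ≤ 1 := this
      _ ≤ ‖f z‖ := hfz
  have heq := Complex.eqOn_of_isPreconnected_of_isMaxOn_norm
    (convex_ball (0:ℂ) 1).isPreconnected isOpen_ball hfdiff.differentiableOn hz hmaxon
  -- f is locally constant near z, so deriv f z = 0
  have hev : f =ᶠ[nhds z] (fun _ => f z) := by
    filter_upwards [isOpen_ball.mem_nhds hz] with w hw
    exact heq hw
  have hder0 : deriv f z = 0 := by
    rw [hev.deriv_eq]
    exact deriv_const _ _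
  -- compute deriv f z
  have hgder : HasDerivAt g ((n:ℂ) * z ^ (n-1) + (n:ℂ)) z := by
    have h1 : HasDerivAt (fun w : ℂ => w ^ n) ((n:ℂ) * z ^ (n-1)) z := hasDerivAt_pow n z
    have h2 : HasDerivAt (fun w : ℂ => (n:ℂ) * w) ((n:ℂ)) z := by
      simpa using (hasDerivAt_id z).const_mul (n:ℂ)
    exact (h1.add h2).add_const (C:ℂ)
  have hfder : HasDerivAt f (Complex.exp (-(g z)) * (-((n:ℂ) * z ^ (n-1) + (n:ℂ)))) z :=
    hgder.neg.cexp
  have := hfder.deriv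
  rw [hder0] at this
  have hexp0 : Complex.exp (-(g z)) ≠ 0 := Complex.exp_ne_zero _
  have hzero : (n:ℂ) * z ^ (n-1) + (n:ℂ) = 0 := by
    rcases mul_eq_zero.mp this.symm with h | h
    · exact absurd h hexp0
    · exact neg_eq_zero.mp h
  have hzn : z ^ (n-1) = -1 := by
    have hn0 : (n:ℂ) ≠ 0 := by
      simp only [ne_eq, Nat.cast_eq_zero]
      omega
    have h2 : (n:ℂ) * (z ^ (n-1) + 1) = 0 := by linear_combination hzero
    rcases mul_eq_zero.mp h2 with h | h
    · exact absurd h hn0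
    · exact eq_neg_of_add_eq_zero_left h
  have : ‖z ^ (n-1)‖ = 1 := by rw [hzn]; simp
  have hlt : ‖z‖ < 1 := by simpa [Complex.dist_eq] using hz
  have : ‖z‖ ^ (n-1) = 1 := by rw [← norm_pow, this]
  have hne1 : ‖z‖ ^ (n-1) < 1 := by
    apply pow_lt_one₀ (norm_nonneg z) hlt
    omega
  linarith [this, hne1]

lemma aux_cos_nt0 (n : ℕ) (hn : 4 ≤ n) (hne : Even n) :
    Real.cos ((n:ℝ) * ((n:ℝ) * π / ((n:ℝ) + 1))) = - Real.cos (π / ((n:ℝ) + 1)) := by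
  obtain ⟨m, hm⟩ := hne
  have hn2 : (n:ℝ) = 2 * (m:ℝ) := by exact_mod_cast by omega
  have hpos : (0:ℝ) < (n:ℝ) + 1 := by positivity
  have he : (n:ℝ) * ((n:ℝ) * π / ((n:ℝ) + 1))
      = (m:ℝ) * (2 * π) - (n:ℝ) * π / ((n:ℝ) + 1) := by
    field_simp
    rw [hn2]
    ring
  rw [he, Real.cos_nat_mul_two_pi_sub, aux_cos_t0 n hn]

theorem stmt3 (n : ℕ) (hn : 4 ≤ n) (hne : Even n) :
    ∀ z ∈ ball (0 : ℂ) 1,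
      (1 + (n : ℝ) + (n : ℝ) * Real.cos ((n : ℝ) * Real.pi / ((n : ℝ) + 1))
          + Real.cos ((n : ℝ) * ((n : ℝ) * Real.pi / ((n : ℝ) + 1)))) / ((n : ℝ) + 1)
        < (phinL n z).re := by
  intro z hz
  have hpos : (0:ℝ) < (n:ℝ) + 1 := by positivity
  set c : ℝ := Real.cos (π/((n:ℝ)+1)) with hc
  rw [aux_cos_t0 n hn, aux_cos_nt0 n hn hne]
  have key := aux_interior n hn hne hz
  have key' : 0 < (z^n).re + (n:ℝ) * z.re + ((n:ℝ)+1) * c := by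
    have hexp : (z ^ n + (n:ℂ) * z + ((((n:ℝ)+1) * c : ℝ) : ℂ)).re
        = (z^n).re + (n:ℝ) * z.re + ((n:ℝ)+1) * c := by
      simp [Complex.add_re, Complex.mul_re]
    rw [hexp] at key
    exact key
  have hre : (phinL n z).re = 1 + ((n:ℝ) * z.re + (z^n).re) / ((n:ℝ)+1) := by
    have hcast : ((n:ℂ)+1) = ((((n:ℝ)+1 : ℝ)) : ℂ) := by push_cast; ring
    rw [phinL, hcast]
    rw [Complex.add_re, Complex.add_re, Complex.div_ofReal_re, Complex.div_ofReal_re]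
    have : ((n:ℂ) * z).re = (n:ℝ) * z.re := by simp [Complex.mul_re]
    rw [this, Complex.one_re]
    ring
  have hdiff : (phinL n z).re - (1 + (n:ℝ) + (n:ℝ) * (-c) + -c) / ((n:ℝ)+1)
      = ((z^n).re + (n:ℝ) * z.re + ((n:ℝ)+1) * c) / ((n:ℝ)+1) := by
    rw [hre]
    field_simp
    ring
  have := div_pos key' hpos
  linarith [hdiff, this]
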